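/- arXiv:1209.5154 — 3 statements merged into one kernel-verified Lean document; each statement's English description precedes it below -/
import Mathlib

section
/- Let H be a complex Hilbert space and let Δ : B(H) → B(H) be a 2-local derivation, i.e., for every pair x, y ∈ B(H) there exists a ℂ-linear map D : B(H) → B(H) satisfying D(a b) = D(a) b + a D(b) for all a, b ∈ B(H), such that Δ(x) = D(x) and Δ(y) = D(y). Then the restriction of Δ to the ideal of finite-rank operators is additive: Δ(u + v) = Δ(u) + Δ(v) for all finite-rank operators u, v ∈ B(H). -/
set_option linter.unusedSectionVars false
set_option maxHeartbeats 1000000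

namespace TLDaux

variable {H : Type*} [NormedAddCommGroup H] [InnerProductSpace ℂ H] [CompleteSpace H]

local notation "⟪" x ", " y "⟫" => @inner ℂ _ _ x y




/-- rank one operator `x ↦ ⟪η, x⟫ • ξ`. -/
noncomputable def rk1 (ξ η : H) : H →L[ℂ] H := (innerSL ℂ η).smulRight ξ

@[simp] lemma rk1_apply (ξ η x : H) : rk1 ξ η x = ⟪η, x⟫ • ξ := rfl

/-- finite rank predicate -/
def FR (f : H →L[ℂ] H) : Prop := FiniteDimensional ℂ (LinearMap.range (f : H →ₗ[ℂ] H))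

lemma FR_def {f : H →L[ℂ] H} : FR f ↔ FiniteDimensional ℂ (LinearMap.range (f : H →ₗ[ℂ] H)) :=
  Iff.rfl

lemma FR_of_range_le {f : H →L[ℂ] H} {V : Submodule ℂ H} [FiniteDimensional ℂ V]
    (hle : LinearMap.range (f : H →ₗ[ℂ] H) ≤ V) : FR f :=
  Submodule.finiteDimensional_of_le hle

lemma FR_zero : FR (0 : H →L[ℂ] H) := by
  have : LinearMap.range ((0 : H →L[ℂ] H) : H →ₗ[ℂ] H) ≤ (⊥ : Submodule ℂ H) := by
    rintro x ⟨y, rfl⟩; simp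
  exact FR_of_range_le this

lemma FR_rk1 (ξ η : H) : FR (rk1 ξ η) := by
  have : LinearMap.range ((rk1 ξ η : H →L[ℂ] H) : H →ₗ[ℂ] H) ≤ (ℂ ∙ ξ) := by
    rintro x ⟨y, rfl⟩
    exact Submodule.smul_mem _ _ (Submodule.mem_span_singleton_self ξ)
  exact FR_of_range_le this

lemma FR_mul_right {f : H →L[ℂ] H} (hf : FR f) (g : H →L[ℂ] H) : FR (f * g) := by
  have : LinearMap.range ((f * g : H →L[ℂ] H) : H →ₗ[ℂ] H) ≤
      LinearMap.range (f : H →ₗ[ℂ] H) := by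
    rintro x ⟨y, rfl⟩; exact ⟨g y, rfl⟩
  exact @FR_of_range_le _ _ _ _ _ _ hf this

lemma FR_mul_left {g : H →L[ℂ] H} (hg : FR g) (f : H →L[ℂ] H) : FR (f * g) := by
  haveI : FiniteDimensional ℂ (LinearMap.range (g : H →ₗ[ℂ] H)) := hg
  haveI : FiniteDimensional ℂ
      ((LinearMap.range (g : H →ₗ[ℂ] H)).map (f : H →ₗ[ℂ] H)) :=
    Module.Finite.map _ _
  apply FR_of_range_le (V := (LinearMap.range (g : H →ₗ[ℂ] H)).map (f : H →ₗ[ℂ] H))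
  rintro x ⟨y, rfl⟩
  exact ⟨g y, ⟨y, rfl⟩, rfl⟩

lemma FR_add {f g : H →L[ℂ] H} (hf : FR f) (hg : FR g) : FR (f + g) := by
  haveI : FiniteDimensional ℂ (LinearMap.range (f : H →ₗ[ℂ] H)) := hf
  haveI : FiniteDimensional ℂ (LinearMap.range (g : H →ₗ[ℂ] H)) := hg
  apply FR_of_range_le
    (V := LinearMap.range (f : H →ₗ[ℂ] H) ⊔ LinearMap.range (g : H →ₗ[ℂ] H))
  rintro x ⟨y, rfl⟩
  exact Submodule.add_mem_sup ⟨y, rfl⟩ ⟨y, rfl⟩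

lemma FR_smul {f : H →L[ℂ] H} (hf : FR f) (c : ℂ) : FR (c • f) := by
  haveI : FiniteDimensional ℂ (LinearMap.range (f : H →ₗ[ℂ] H)) := hf
  apply FR_of_range_le (V := LinearMap.range (f : H →ₗ[ℂ] H))
  rintro x ⟨y, rfl⟩
  exact Submodule.smul_mem _ _ ⟨y, rfl⟩

lemma FR_adjoint {f : H →L[ℂ] H} (hf : FR f) : FR (ContinuousLinearMap.adjoint f) := by
  haveI : FiniteDimensional ℂ (LinearMap.range (f : H →ₗ[ℂ] H)) := hf
  set V : Submodule ℂ H := LinearMap.range (f : H →ₗ[ℂ] H)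
  haveI : FiniteDimensional ℂ
      (V.map ((ContinuousLinearMap.adjoint f : H →L[ℂ] H) : H →ₗ[ℂ] H)) :=
    Module.Finite.map _ _
  apply FR_of_range_le
    (V := V.map ((ContinuousLinearMap.adjoint f : H →L[ℂ] H) : H →ₗ[ℂ] H))
  rintro x ⟨y, rfl⟩
  -- decompose y = P y + (y - P y) with P the orthogonal projection on V
  haveI : CompleteSpace V := FiniteDimensional.complete ℂ V
  set P := V.orthogonalProjectionOnto
  have hperp : (y - (P y : H)) ∈ Vᗮ := V.sub_starProjection_mem_orthogonal y
  have hker : ContinuousLinearMap.adjoint f (y - (P y : H)) = 0 := by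
    apply ext_inner_right ℂ
    intro w
    rw [ContinuousLinearMap.adjoint_inner_left]
    simp [inner_zero_left]
    exact inner_eq_zero_symm.mp (hperp (f w) ⟨w, rfl⟩)
  refine ⟨(P y : H), (P y).2, ?_⟩
  have : ContinuousLinearMap.adjoint f y
      = ContinuousLinearMap.adjoint f (P y : H) := by
    have := map_sub (ContinuousLinearMap.adjoint f) y (P y : H)
    rw [hker] at this
    linear_combination (norm := module) -this
  exact this.symm



/-- expansion of an element of `V` along an orthonormal basis of `V` -/
lemma onb_expand {V : Submodule ℂ H} {ι : Type*} [Fintype ι]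
    (b : OrthonormalBasis ι ℂ V) {x : H} (hx : x ∈ V) :
    x = ∑ i, ⟪(b i : H), x⟫ • (b i : H) := by
  have h2 : ((∑ i, b.repr ⟨x, hx⟩ i • b i : V) : H) = x := by rw [b.sum_repr]
  conv_lhs => rw [← h2]
  push_cast
  refine Finset.sum_congr rfl fun i _ => ?_
  congr 1
  rw [b.repr_apply_apply]
  exact (Submodule.coe_inner V (b i) ⟨x, hx⟩)

/-- the diagonal sum of `f` w.r.t. an ONB of a subspace is independent of choices, provided
the subspaces contain the relevant ranges. -/
lemma sum_diag_eq {f : H →L[ℂ] H} {V W : Submodule ℂ H}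
    {ι κ : Type*} [Fintype ι] [Fintype κ]
    (d : OrthonormalBasis ι ℂ V) (e : OrthonormalBasis κ ℂ W)
    (hV : LinearMap.range (f : H →ₗ[ℂ] H) ≤ V)
    (hW : LinearMap.range ((ContinuousLinearMap.adjoint f : H →L[ℂ] H) : H →ₗ[ℂ] H) ≤ W) :
    ∑ i, ⟪(e i : H), f (e i)⟫ = ∑ j, ⟪(d j : H), f (d j)⟫ := by
  have expand : ∀ i : κ, f (e i) = ∑ j, ⟪(d j : H), f (e i)⟫ • (d j : H) :=
    fun i => onb_expand d (hV ⟨e i, rfl⟩)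
  calc ∑ i, ⟪(e i : H), f (e i)⟫
      = ∑ i, ∑ j, ⟪(d j : H), f (e i)⟫ * ⟪(e i : H), (d j : H)⟫ := by
        refine Finset.sum_congr rfl fun i _ => ?_
        conv_lhs => rw [expand i]
        rw [inner_sum]
        refine Finset.sum_congr rfl fun j _ => ?_
        rw [inner_smul_right]
    _ = ∑ j, ∑ i, ⟪(ContinuousLinearMap.adjoint f (d j) : H), (e i : H)⟫
          * ⟪(e i : H), (d j : H)⟫ := by
        rw [Finset.sum_comm]
        refine Finset.sum_congr rfl fun j _ => Finset.sum_congr rfl fun i _ => ?_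
        rw [ContinuousLinearMap.adjoint_inner_left]
    _ = ∑ j, ⟪(ContinuousLinearMap.adjoint f (d j) : H), (d j : H)⟫ := by
        refine Finset.sum_congr rfl fun j _ => ?_
        have hmem : ContinuousLinearMap.adjoint f (d j : H) ∈ W := hW ⟨d j, rfl⟩
        conv_rhs => rw [onb_expand e hmem]
        rw [sum_inner]
        refine Finset.sum_congr rfl fun i _ => ?_
        rw [inner_smul_left, inner_conj_symm]
    _ = ∑ j, ⟪(d j : H), f (d j)⟫ := by
        refine Finset.sum_congr rfl fun j _ => ?_
        rw [ContinuousLinearMap.adjoint_inner_left]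

/-- the finite-dimensional subspace attached to `f` -/
noncomputable def Wf (f : H →L[ℂ] H) : Submodule ℂ H :=
  LinearMap.range (f : H →ₗ[ℂ] H) ⊔
    LinearMap.range ((ContinuousLinearMap.adjoint f : H →L[ℂ] H) : H →ₗ[ℂ] H)

lemma Wf_fd {f : H →L[ℂ] H} (hf : FR f) : FiniteDimensional ℂ (Wf f) := by
  haveI : FiniteDimensional ℂ (LinearMap.range (f : H →ₗ[ℂ] H)) := hf
  haveI : FiniteDimensional ℂ
      (LinearMap.range ((ContinuousLinearMap.adjoint f : H →L[ℂ] H) : H →ₗ[ℂ] H)) :=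
    FR_adjoint hf
  exact Submodule.finiteDimensional_sup _ _

open scoped Classical in
/-- the trace of a finite-rank operator -/
noncomputable def tau (f : H →L[ℂ] H) : ℂ :=
  if h : FiniteDimensional ℂ (Wf f) then
    haveI := h
    ∑ i, ⟪((stdOrthonormalBasis ℂ (Wf f)) i : H), f ((stdOrthonormalBasis ℂ (Wf f)) i : H)⟫
  else 0

/-- the trace is computed by any ONB of any finite-dimensional subspace containing the range -/
lemma tau_eq_sum {f : H →L[ℂ] H} (hf : FR f) {V : Submodule ℂ H} [FiniteDimensional ℂ V]
    {ι : Type*} [Fintype ι] (d : OrthonormalBasis ι ℂ V)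
    (hV : LinearMap.range (f : H →ₗ[ℂ] H) ≤ V) :
    tau f = ∑ j, ⟪(d j : H), f (d j)⟫ := by
  haveI hW := Wf_fd hf
  rw [tau, dif_pos hW]
  exact sum_diag_eq d (stdOrthonormalBasis ℂ (Wf f)) hV le_sup_right

lemma tau_add {f g : H →L[ℂ] H} (hf : FR f) (hg : FR g) :
    tau (f + g) = tau f + tau g := by
  haveI : FiniteDimensional ℂ (LinearMap.range (f : H →ₗ[ℂ] H)) := hf
  haveI : FiniteDimensional ℂ (LinearMap.range (g : H →ₗ[ℂ] H)) := hg
  set V : Submodule ℂ H :=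
    LinearMap.range (f : H →ₗ[ℂ] H) ⊔ LinearMap.range (g : H →ₗ[ℂ] H) with hVdef
  haveI : FiniteDimensional ℂ V := Submodule.finiteDimensional_sup _ _
  set d := stdOrthonormalBasis ℂ V
  have hfV : LinearMap.range (f : H →ₗ[ℂ] H) ≤ V := le_sup_left
  have hgV : LinearMap.range (g : H →ₗ[ℂ] H) ≤ V := le_sup_right
  have hfgV : LinearMap.range ((f + g : H →L[ℂ] H) : H →ₗ[ℂ] H) ≤ V := by
    rintro x ⟨y, rfl⟩
    exact Submodule.add_mem_sup ⟨y, rfl⟩ ⟨y, rfl⟩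
  rw [tau_eq_sum (FR_add hf hg) d hfgV, tau_eq_sum hf d hfV, tau_eq_sum hg d hgV,
    ← Finset.sum_add_distrib]
  refine Finset.sum_congr rfl fun j _ => ?_
  rw [ContinuousLinearMap.add_apply, inner_add_right]

lemma tau_smul {f : H →L[ℂ] H} (hf : FR f) (c : ℂ) :
    tau (c • f) = c * tau f := by
  haveI : FiniteDimensional ℂ (LinearMap.range (f : H →ₗ[ℂ] H)) := hf
  set V : Submodule ℂ H := LinearMap.range (f : H →ₗ[ℂ] H)
  set d := stdOrthonormalBasis ℂ V
  have hfV : LinearMap.range (f : H →ₗ[ℂ] H) ≤ V := le_rfl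
  have hcV : LinearMap.range ((c • f : H →L[ℂ] H) : H →ₗ[ℂ] H) ≤ V := by
    rintro x ⟨y, rfl⟩
    exact Submodule.smul_mem _ _ ⟨y, rfl⟩
  rw [tau_eq_sum (FR_smul hf c) d hcV, tau_eq_sum hf d hfV, Finset.mul_sum]
  refine Finset.sum_congr rfl fun j _ => ?_
  rw [ContinuousLinearMap.smul_apply, inner_smul_right]

lemma tau_zero : tau (0 : H →L[ℂ] H) = 0 := by
  have := tau_smul (FR_zero (H := H)) 0
  rw [zero_smul, zero_mul] at this
  exact this

lemma tau_sub {f g : H →L[ℂ] H} (hf : FR f) (hg : FR g) :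
    tau (f - g) = tau f - tau g := by
  have h1 : f - g = f + (-1 : ℂ) • g := by
    rw [neg_one_smul, sub_eq_add_neg]
  rw [h1, tau_add hf (FR_smul hg (-1)), tau_smul hg, neg_one_mul, sub_eq_add_neg]

lemma tau_rk1 (ξ η : H) : tau (rk1 ξ η) = ⟪η, ξ⟫ := by
  by_cases hξ : ξ = 0
  · subst hξ
    have : rk1 (0 : H) η = 0 := by ext x; simp
    rw [this, tau_zero, inner_zero_right]
  by_cases hη : η = 0
  · subst hη
    have : rk1 ξ (0 : H) = 0 := by ext x; simp
    rw [this, tau_zero, inner_zero_left]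
  · haveI hFR : FR (rk1 ξ η) := FR_rk1 ξ η
    haveI : FiniteDimensional ℂ (LinearMap.range ((rk1 ξ η : H →L[ℂ] H) : H →ₗ[ℂ] H)) := hFR
    set V : Submodule ℂ H := LinearMap.range ((rk1 ξ η : H →L[ℂ] H) : H →ₗ[ℂ] H)
    set d := stdOrthonormalBasis ℂ V
    have hξV : ξ ∈ V := by
      refine ⟨(⟪η, η⟫)⁻¹ • η, ?_⟩
      have hnz : ⟪η, η⟫ ≠ (0 : ℂ) := by
        simpa using hη
      show ⟪η, (⟪η, η⟫)⁻¹ • η⟫ • ξ = ξ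
      rw [inner_smul_right, inv_mul_cancel₀ hnz, one_smul]
    rw [tau_eq_sum hFR d le_rfl]
    have hexp := onb_expand d hξV
    calc ∑ j, ⟪(d j : H), rk1 ξ η (d j)⟫
        = ∑ j, ⟪η, (d j : H)⟫ * ⟪(d j : H), ξ⟫ := by
          refine Finset.sum_congr rfl fun j _ => ?_
          rw [rk1_apply, inner_smul_right, mul_comm]
      _ = ⟪η, ξ⟫ := by
          conv_rhs => rw [hexp]
          rw [inner_sum]
          refine Finset.sum_congr rfl fun j _ => ?_
          rw [inner_smul_right, mul_comm]

lemma comp_rk1 (a : H →L[ℂ] H) (ξ η : H) : a * rk1 ξ η = rk1 (a ξ) η := by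
  ext x; simp [rk1]

lemma rk1_comp (a : H →L[ℂ] H) (ξ η : H) :
    rk1 ξ η * a = rk1 ξ (ContinuousLinearMap.adjoint a η) := by
  ext x
  simp only [ContinuousLinearMap.mul_apply, rk1_apply]
  rw [ContinuousLinearMap.adjoint_inner_left]

lemma smul_rk1 (c : ℂ) (ξ η : H) : c • rk1 ξ η = rk1 (c • ξ) η := by
  ext x; simp [rk1, smul_smul, mul_comm]

lemma tau_comp_rk1 (a : H →L[ℂ] H) (ξ η : H) : tau (a * rk1 ξ η) = ⟪η, a ξ⟫ := by
  rw [comp_rk1, tau_rk1]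

lemma tau_rk1_comp (a : H →L[ℂ] H) (ξ η : H) : tau (rk1 ξ η * a) = ⟪η, a ξ⟫ := by
  rw [rk1_comp, tau_rk1, ContinuousLinearMap.adjoint_inner_left]


lemma rk1_mul_rk1 (a b ξ η : H) :
    rk1 a b * rk1 ξ η = rk1 (⟪b, ξ⟫ • a) η := by
  ext x
  simp only [ContinuousLinearMap.mul_apply, rk1_apply, inner_smul_right, smul_smul]

lemma rk1_zero_left (η : H) : rk1 (0 : H) η = 0 := by ext x; simp

section Derivation

variable {D : (H →L[ℂ] H) →ₗ[ℂ] (H →L[ℂ] H)}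
variable (hD : ∀ a b : H →L[ℂ] H, D (a * b) = D a * b + a * D b)

include hD

lemma FR_D_rk1 (ξ η : H) : FR (D (rk1 ξ η)) := by
  by_cases hξ : ξ = 0
  · subst hξ
    rw [rk1_zero_left, map_zero]
    exact FR_zero
  · have hξξ : ⟪ξ, ξ⟫ ≠ (0 : ℂ) := by simpa using hξ
    set p : H →L[ℂ] H := rk1 ((⟪ξ, ξ⟫)⁻¹ • ξ) ξ with hp
    have hpe : p * rk1 ξ η = rk1 ξ η := by
      rw [hp, rk1_mul_rk1, smul_smul, mul_inv_cancel₀ hξξ, one_smul]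
    have : D (rk1 ξ η) = D p * rk1 ξ η + p * D (rk1 ξ η) := by
      conv_lhs => rw [← hpe]
      exact hD p (rk1 ξ η)
    rw [this]
    exact FR_add (FR_mul_left (FR_rk1 ξ η) (D p)) (FR_mul_right (FR_rk1 _ _) (D (rk1 ξ η)))

lemma tau_D_rk1 (ζ η : H) : tau (D (rk1 ζ η)) = 0 := by
  by_cases hζ : ζ = 0
  · subst hζ
    rw [rk1_zero_left, map_zero, tau_zero]
  by_cases hlam : ⟪η, ζ⟫ = (0 : ℂ)
  · -- nilpotent case : z = p*z - z*p
    have hζζ : ⟪ζ, ζ⟫ ≠ (0 : ℂ) := by simpa using hζ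
    set p : H →L[ℂ] H := rk1 ((⟪ζ, ζ⟫)⁻¹ • ζ) ζ with hp
    set z : H →L[ℂ] H := rk1 ζ η with hz
    have hpz : p * z = z := by
      rw [hp, hz, rk1_mul_rk1, smul_smul, mul_inv_cancel₀ hζζ, one_smul]
    have hzp : z * p = 0 := by
      rw [hp, hz, rk1_mul_rk1, inner_smul_right, hlam, mul_zero, zero_smul, rk1_zero_left]
    have hzdef : z = p * z - z * p := by rw [hpz, hzp, sub_zero]
    have hDz : D z = (D p * z + p * D z) - (D z * p + z * D p) := by
      conv_lhs => rw [hzdef]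
      rw [map_sub, hD p z, hD z p]
    have hFRz : FR z := FR_rk1 _ _
    have hFRp : FR p := FR_rk1 _ _
    have hFRDz : FR (D z) := FR_D_rk1 hD ζ η
    have hFRDp : FR (D p) := FR_D_rk1 hD _ _
    rw [hDz,
      tau_sub (FR_add (FR_mul_left hFRz (D p)) (FR_mul_right hFRp (D z)))
        (FR_add (FR_mul_left hFRp (D z)) (FR_mul_right hFRz (D p))),
      tau_add (FR_mul_left hFRz (D p)) (FR_mul_right hFRp (D z)),
      tau_add (FR_mul_left hFRp (D z)) (FR_mul_right hFRz (D p))]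
    have e1 : tau (D p * z) = tau (z * D p) := by
      rw [hz, tau_comp_rk1, tau_rk1_comp]
    have e2 : tau (p * D z) = tau (D z * p) := by
      rw [hp, tau_rk1_comp, tau_comp_rk1]
    rw [e1, e2]
    ring
  · -- idempotent case
    have h1 : ⟪η, (⟪η, ζ⟫)⁻¹ • ζ⟫ = (1 : ℂ) := by
      rw [inner_smul_right, inv_mul_cancel₀ hlam]
    set ξ' : H := (⟪η, ζ⟫)⁻¹ • ζ with hξ'
    set p : H →L[ℂ] H := rk1 ξ' η with hp
    have hpp : p * p = p := by
      rw [hp, rk1_mul_rk1]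
      congr 1
      rw [hξ', inner_smul_right, inv_mul_cancel₀ hlam, one_smul]
    have hzp : rk1 ζ η = ⟪η, ζ⟫ • p := by
      rw [hp, smul_rk1, hξ', smul_smul, mul_inv_cancel₀ hlam, one_smul]
    have hFRp : FR p := FR_rk1 _ _
    have hFRDp : FR (D p) := FR_D_rk1 hD _ _
    rw [hzp, map_smul, tau_smul hFRDp]
    have hDp : D p = D p * p + p * D p := by
      conv_lhs => rw [← hpp]
      exact hD p p
    -- p * D p * p = 0
    have hpap : p * D p * p = 0 := by
      have h2 : p * D p * p = p * D p * p + p * D p * p := by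
        conv_lhs => rw [hDp, mul_add, add_mul]
        congr 1
        · rw [← mul_assoc p (D p) p, mul_assoc (p * D p) p p, hpp]
        · rw [← mul_assoc p p (D p), hpp]
      exact (left_eq_add.mp h2)
    have hinner : ⟪η, D p ξ'⟫ = 0 := by
      have t0 : tau ((p * D p) * p) = 0 := by rw [hpap, tau_zero]
      rw [hp] at t0
      rw [tau_comp_rk1 (rk1 ξ' η * D p) ξ' η] at t0
      -- t0 : ⟪η, (rk1 ξ' η * D p) ξ'⟫ = 0
      rw [ContinuousLinearMap.mul_apply, rk1_apply, inner_smul_right, h1, mul_one] at t0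
      exact t0
    have tDp : tau (D p) = 0 := by
      rw [hDp, tau_add (FR_mul_left hFRp (D p)) (FR_mul_right hFRp (D p))]
      have e1 : tau (D p * p) = ⟪η, D p ξ'⟫ := by rw [hp, tau_comp_rk1]
      have e2 : tau (p * D p) = ⟪η, D p ξ'⟫ := by rw [hp, tau_rk1_comp]
      rw [e1, e2, hinner, add_zero]
    rw [tDp, mul_zero]

end Derivation

variable {Δ : (H →L[ℂ] H) → (H →L[ℂ] H)}
variable (hΔ : ∀ x y : H →L[ℂ] H, ∃ D : (H →L[ℂ] H) →ₗ[ℂ] (H →L[ℂ] H),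
      (∀ a b : H →L[ℂ] H, D (a * b) = D a * b + a * D b) ∧
      Δ x = D x ∧ Δ y = D y)

include hΔ

lemma FR_Delta_rk1 (ξ η : H) : FR (Δ (rk1 ξ η)) := by
  obtain ⟨D, hD, hx, -⟩ := hΔ (rk1 ξ η) (rk1 ξ η)
  rw [hx]
  exact FR_D_rk1 hD ξ η

lemma key (x : H →L[ℂ] H) (ξ η : H) :
    tau (Δ x * rk1 ξ η) = - tau (x * Δ (rk1 ξ η)) := by
  obtain ⟨D, hD, hx, he⟩ := hΔ x (rk1 ξ η)
  rw [hx, he]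
  have hxe : D (x * rk1 ξ η) = D x * rk1 ξ η + x * D (rk1 ξ η) := hD x _
  have h1 : D x * rk1 ξ η = D (x * rk1 ξ η) - x * D (rk1 ξ η) := by
    rw [hxe]; exact (add_sub_cancel_right _ _).symm
  have hFR1 : FR (D (x * rk1 ξ η)) := by
    rw [comp_rk1]; exact FR_D_rk1 hD _ _
  have hFR2 : FR (x * D (rk1 ξ η)) := FR_mul_left (FR_D_rk1 hD ξ η) x
  rw [h1, tau_sub hFR1 hFR2]
  have h0 : tau (D (x * rk1 ξ η)) = 0 := by
    rw [comp_rk1]; exact tau_D_rk1 hD _ _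
  rw [h0, zero_sub]

theorem main (u v : H →L[ℂ] H) : Δ (u + v) = Δ u + Δ v := by
  ext ξ
  apply ext_inner_left ℂ
  intro η
  have he : FR (Δ (rk1 ξ η)) := FR_Delta_rk1 hΔ ξ η
  calc ⟪η, Δ (u + v) ξ⟫
      = tau (Δ (u + v) * rk1 ξ η) := (tau_comp_rk1 _ ξ η).symm
    _ = - tau ((u + v) * Δ (rk1 ξ η)) := key hΔ (u + v) ξ η
    _ = - (tau (u * Δ (rk1 ξ η)) + tau (v * Δ (rk1 ξ η))) := by
        rw [add_mul, tau_add (FR_mul_left he u) (FR_mul_left he v)]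
    _ = (- tau (u * Δ (rk1 ξ η))) + (- tau (v * Δ (rk1 ξ η))) := by ring
    _ = tau (Δ u * rk1 ξ η) + tau (Δ v * rk1 ξ η) := by
        rw [key hΔ u ξ η, key hΔ v ξ η]
    _ = ⟪η, Δ u ξ⟫ + ⟪η, Δ v ξ⟫ := by rw [tau_comp_rk1, tau_comp_rk1]
    _ = ⟪η, (Δ u + Δ v) ξ⟫ := by
        rw [ContinuousLinearMap.add_apply, inner_add_right]

end TLDaux

/-- A 2-local derivation on B(H) is additive on the ideal of finite-rank operators. -/
theorem twoLocalDerivation_additive_on_finiteRank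
    {H : Type*} [NormedAddCommGroup H] [InnerProductSpace ℂ H] [CompleteSpace H]
    (Δ : (H →L[ℂ] H) → (H →L[ℂ] H))
    (h : ∀ x y : H →L[ℂ] H, ∃ D : (H →L[ℂ] H) →ₗ[ℂ] (H →L[ℂ] H),
      (∀ a b : H →L[ℂ] H, D (a * b) = D a * b + a * D b) ∧
      Δ x = D x ∧ Δ y = D y) :
    ∀ u v : H →L[ℂ] H,
      FiniteDimensional ℂ (LinearMap.range (u : H →ₗ[ℂ] H)) →
      FiniteDimensional ℂ (LinearMap.range (v : H →ₗ[ℂ] H)) →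
      Δ (u + v) = Δ u + Δ v := by
  intro u v _ _
  exact TLDaux.main h u v
end

section
/- Let H be a complex Hilbert space and let Δ : B(H) → B(H) be a 2-local derivation, i.e., for every pair x, y ∈ B(H) there exists a ℂ-linear map D : B(H) → B(H) satisfying D(a b) = D(a) b + a D(b) for all a, b ∈ B(H), such that Δ(x) = D(x) and Δ(y) = D(y). If Δ(x) = 0 for every finite-rank operator x ∈ B(H), then Δ(x) = 0 for all x ∈ B(H). -/
/-- A 2-local derivation on B(H) vanishing on all finite-rank operators vanishes. -/
theorem twoLocalDerivation_vanishing_on_finiteRank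
    {H : Type*} [NormedAddCommGroup H] [InnerProductSpace ℂ H] [CompleteSpace H]
    (Δ : (H →L[ℂ] H) → (H →L[ℂ] H))
    (h : ∀ x y : H →L[ℂ] H, ∃ D : (H →L[ℂ] H) →ₗ[ℂ] (H →L[ℂ] H),
      (∀ a b : H →L[ℂ] H, D (a * b) = D a * b + a * D b) ∧
      Δ x = D x ∧ Δ y = D y)
    (hfin : ∀ x : H →L[ℂ] H,
      FiniteDimensional ℂ (LinearMap.range (x : H →ₗ[ℂ] H)) → Δ x = 0) :
    ∀ x : H →L[ℂ] H, Δ x = 0 := by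
  intro x
  ext ξ
  simp only [ContinuousLinearMap.zero_apply]
  by_cases hξ : ξ = 0
  · simp [hξ]
  set η : H := Δ x ξ with hη
  -- the rank one operator v ↦ ⟪η, v⟫ • ξ
  set y : H →L[ℂ] H := (innerSL ℂ η).smulRight ξ with hy
  have hyapp : ∀ v : H, y v = (inner ℂ η v : ℂ) • ξ := fun v => rfl
  -- y has finite-dimensional range
  have hyfin : FiniteDimensional ℂ (LinearMap.range (y : H →ₗ[ℂ] H)) := by
    have hle : LinearMap.range (y : H →ₗ[ℂ] H) ≤ Submodule.span ℂ {ξ} := by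
      rintro v ⟨w, rfl⟩
      exact Submodule.smul_mem _ _ (Submodule.mem_span_singleton_self ξ)
    exact Submodule.finiteDimensional_of_le hle
  obtain ⟨D, hD, hDx, hDy⟩ := h x y
  have hDy0 : D y = 0 := by rw [← hDy]; exact hfin y hyfin
  -- key algebraic identity
  have key : y * x * y = (inner ℂ η (x ξ) : ℂ) • y := by
    ext v
    simp only [ContinuousLinearMap.mul_apply, ContinuousLinearMap.smul_apply, hyapp,
      map_smul, inner_smul_right, smul_smul]
    ring_nf
  have h1 : D (y * x * y) = y * D x * y := by
    rw [hD (y * x) y, hD y x, hDy0]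
    simp [mul_assoc]
  have h2 : D (y * x * y) = 0 := by
    rw [key, map_smul, hDy0, smul_zero]
  have h3 : y * Δ x * y = 0 := by
    rw [hDx, ← h1, h2]
  have h4 : (y * Δ x * y) η = 0 := by rw [h3]; rfl
  have h5 : ((inner ℂ η η : ℂ) * (inner ℂ η η : ℂ)) • ξ = 0 := by
    have : (y * Δ x * y) η = ((inner ℂ η η : ℂ) * (inner ℂ η η : ℂ)) • ξ := by
      simp only [ContinuousLinearMap.mul_apply, hyapp, map_smul, ← hη,
        inner_smul_right, smul_smul]
    rw [← this, h4]
  rcases smul_eq_zero.mp h5 with h6 | h6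
  · have : (inner ℂ η η : ℂ) = 0 := by
      rcases mul_self_eq_zero.mp h6 with h7
      exact h7
    exact inner_self_eq_zero.mp this
  · exact absurd h6 hξ
end

section
/- Let H be an infinite-dimensional complex Hilbert space and let Δ : B(H) → B(H) be a 2-local derivation, i.e., for every pair x, y ∈ B(H) there exists a ℂ-linear map D : B(H) → B(H) satisfying D(a b) = D(a) b + a D(b) for all a, b ∈ B(H), such that Δ(x) = D(x) and Δ(y) = D(y). Then Δ is a derivation; in fact Δ is inner: there exists an operator a ∈ B(H) such that Δ(x) = a x − x a for all x ∈ B(H). -/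
set_option linter.unusedSectionVars false
set_option maxHeartbeats 1000000

open scoped ComplexConjugate
open Filter Topology

namespace TwoLocalAux

variable {H : Type*} [NormedAddCommGroup H] [InnerProductSpace ℂ H] [CompleteSpace H]

local notation "⟪" x ", " y "⟫" => @inner ℂ _ _ x y

/-- rank-one operator `v ↦ ⟪f, v⟫ • g`. -/
noncomputable def rk (g f : H) : H →L[ℂ] H := (innerSL ℂ f).smulRight g

@[simp] lemma rk_apply (g f v : H) : rk g f v = ⟪f, v⟫ • g := rfl

lemma mul_rk (x : H →L[ℂ] H) (g f : H) : x * rk g f = rk (x g) f := by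
  ext v; simp [rk]

lemma rk_add_left (g g' f : H) : rk (g + g') f = rk g f + rk g' f := by
  ext v
  rw [ContinuousLinearMap.add_apply, rk_apply, rk_apply, rk_apply, smul_add]

lemma rk_add_right (g f f' : H) : rk g (f + f') = rk g f + rk g f' := by
  ext v
  rw [ContinuousLinearMap.add_apply, rk_apply, rk_apply, rk_apply, inner_add_left, add_smul]

lemma rk_smul_left (c : ℂ) (g f : H) : rk (c • g) f = c • rk g f := by
  ext v
  rw [ContinuousLinearMap.smul_apply, rk_apply, rk_apply, smul_comm]

lemma rk_zero_left (f : H) : rk (0 : H) f = 0 := by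
  ext v; rw [rk_apply, smul_zero]; rfl

/-- commutator -/
def comm (a x : H →L[ℂ] H) : H →L[ℂ] H := a * x - x * a

lemma comm_apply (a x : H →L[ℂ] H) (v : H) : comm a x v = a (x v) - x (a v) := rfl

lemma comm_add_right (a x y : H →L[ℂ] H) : comm a (x + y) = comm a x + comm a y := by
  simp only [comm, mul_add, add_mul]; abel

lemma comm_smul_right (a : H →L[ℂ] H) (c : ℂ) (x : H →L[ℂ] H) :
    comm a (c • x) = c • comm a x := by
  simp only [comm, smul_sub, mul_smul_comm, smul_mul_assoc]

lemma comm_sub_left (a b x : H →L[ℂ] H) : comm (a - b) x = comm a x - comm b x := by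
  simp only [comm, sub_mul, mul_sub]; abel

lemma comm_add_left (a b x : H →L[ℂ] H) : comm (a + b) x = comm a x + comm b x := by
  simp only [comm, add_mul, mul_add]; abel

lemma eq_coeff {s t : ℂ} {η : H} (hη : η ≠ 0) (h : s • η = t • η) : s = t :=
  smul_left_injective ℂ hη h

lemma coeff_zero {s : ℂ} {η : H} (hη : η ≠ 0) (h : s • η = 0) : s = 0 :=
  (smul_eq_zero.mp h).resolve_right hη

/-- commutant of a rank one operator: pointwise version, for arbitrary functions. -/
lemma commutant_rk {d : H → H} {η ζ : H} (hη : η ≠ 0) (hζ : ζ ≠ 0)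
    (hyp : ∀ v, ⟪ζ, v⟫ • d η = ⟪ζ, d v⟫ • η) :
    ∃ lam : ℂ, d η = lam • η ∧ ∀ v, ⟪ζ, d v⟫ = lam * ⟪ζ, v⟫ := by
  have hz : (⟪ζ, ζ⟫ : ℂ) ≠ 0 := fun hc => hζ (inner_self_eq_zero.mp hc)
  have hdη : d η = (⟪ζ, d ζ⟫ / ⟪ζ, ζ⟫) • η := by
    have h1 := hyp ζ
    have : d η = (⟪ζ, ζ⟫)⁻¹ • (⟪ζ, d ζ⟫ • η) := by
      rw [← h1, smul_smul, inv_mul_cancel₀ hz, one_smul]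
    rw [this, smul_smul, div_eq_inv_mul]
  refine ⟨⟪ζ, d ζ⟫ / ⟪ζ, ζ⟫, hdη, ?_⟩
  intro v
  have h2 := hyp v
  rw [hdη, smul_smul] at h2
  exact (eq_coeff hη h2.symm).trans (mul_comm _ _)

/-- pairwise inner implementation -/
def Pairwise2 (Φ : (H →L[ℂ] H) → (H →L[ℂ] H)) : Prop :=
  ∀ x y, ∃ a, Φ x = comm a x ∧ Φ y = comm a y

variable {Φ : (H →L[ℂ] H) → (H →L[ℂ] H)}

lemma master (hP : Pairwise2 Φ) {η ζ : H} (hη : η ≠ 0) (hζ : ζ ≠ 0)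
    {a₀ : H →L[ℂ] H} (ha₀ : Φ (rk η ζ) = comm a₀ (rk η ζ)) (z : H →L[ℂ] H) :
    ⟪ζ, Φ z η⟫ = ⟪ζ, comm a₀ z η⟫ := by
  obtain ⟨a, haz, hau⟩ := hP z (rk η ζ)
  have hcomm : ∀ v, ⟪ζ, v⟫ • (a η - a₀ η) = ⟪ζ, a v - a₀ v⟫ • η := by
    intro v
    have h1 : comm a (rk η ζ) v = comm a₀ (rk η ζ) v := by rw [← hau, ha₀]
    simp only [comm_apply, rk_apply, map_smul] at h1
    rw [inner_sub_right, smul_sub, sub_smul, sub_eq_sub_iff_sub_eq_sub]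
    exact h1
  obtain ⟨lam, hd1, hd2⟩ := commutant_rk (d := fun v => a v - a₀ v) hη hζ hcomm
  have hd1' : a η - a₀ η = lam • η := hd1
  rw [haz, comm_apply, comm_apply]
  have e2 : ⟪ζ, a (z η)⟫ - ⟪ζ, a₀ (z η)⟫ = lam * ⟪ζ, z η⟫ := by
    rw [← inner_sub_right]; exact hd2 (z η)
  have e3 : ⟪ζ, z (a η)⟫ - ⟪ζ, z (a₀ η)⟫ = lam * ⟪ζ, z η⟫ := by
    rw [← inner_sub_right, ← map_sub, hd1', map_smul, inner_smul_right]
  rw [inner_sub_right, inner_sub_right]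
  linear_combination e2 - e3

lemma phi_add (hP : Pairwise2 Φ) (x y : H →L[ℂ] H) : Φ (x + y) = Φ x + Φ y := by
  ext η
  rcases eq_or_ne η 0 with rfl | hη
  · simp
  apply ext_inner_left ℂ
  intro ζ
  rcases eq_or_ne ζ 0 with rfl | hζ
  · simp
  obtain ⟨a₀, ha₀, -⟩ := hP (rk η ζ) (rk η ζ)
  rw [ContinuousLinearMap.add_apply, inner_add_right,
      master hP hη hζ ha₀ (x + y), master hP hη hζ ha₀ x, master hP hη hζ ha₀ y,
      comm_add_right, ContinuousLinearMap.add_apply, inner_add_right]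

lemma phi_smul (hP : Pairwise2 Φ) (c : ℂ) (x : H →L[ℂ] H) : Φ (c • x) = c • Φ x := by
  ext η
  rcases eq_or_ne η 0 with rfl | hη
  · simp
  apply ext_inner_left ℂ
  intro ζ
  rcases eq_or_ne ζ 0 with rfl | hζ
  · simp
  obtain ⟨a₀, ha₀, -⟩ := hP (rk η ζ) (rk η ζ)
  rw [ContinuousLinearMap.smul_apply, inner_smul_right,
      master hP hη hζ ha₀ (c • x), master hP hη hζ ha₀ x,
      comm_smul_right, ContinuousLinearMap.smul_apply, inner_smul_right]

lemma phi_zero (hP : Pairwise2 Φ) : Φ 0 = 0 := by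
  have := phi_smul hP 0 0
  rwa [zero_smul, zero_smul] at this

/-- the candidate implementing vector map (column map). -/
noncomputable def Bmap (Φ : (H →L[ℂ] H) → (H →L[ℂ] H)) (ξ : H) : H → H :=
  fun η => Φ (rk η ξ) ξ

/-- the row map. -/
noncomputable def Rmap (Φ : (H →L[ℂ] H) → (H →L[ℂ] H)) (ξ : H) : H → H :=
  fun ζ => -(ContinuousLinearMap.adjoint (Φ (rk ξ ζ))) ξ

lemma rmap_inner (ξ ζ v : H) : ⟪Rmap Φ ξ ζ, v⟫ = -⟪ξ, Φ (rk ξ ζ) v⟫ := by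
  rw [Rmap, inner_neg_left, ContinuousLinearMap.adjoint_inner_left]

variable {ξ : H}

lemma xi_ne (hξ : (⟪ξ, ξ⟫ : ℂ) = 1) : ξ ≠ 0 := by
  intro h
  rw [h, inner_zero_left] at hξ
  exact zero_ne_one hξ

/-- structure of operators implementing `Φ` at the projection `rk ξ ξ` when `Φ (rk ξ ξ) = 0`. -/
lemma p_struct (hξ : (⟪ξ, ξ⟫ : ℂ) = 1) (hp0 : Φ (rk ξ ξ) = 0) {a : H →L[ℂ] H}
    (ha : Φ (rk ξ ξ) = comm a (rk ξ ξ)) :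
    ∃ lam : ℂ, a ξ = lam • ξ ∧ ∀ v, ⟪ξ, a v⟫ = lam * ⟪ξ, v⟫ := by
  have hξ0 : ξ ≠ 0 := xi_ne hξ
  have hcomm : ∀ v, ⟪ξ, v⟫ • a ξ = ⟪ξ, a v⟫ • ξ := by
    intro v
    have h1 : comm a (rk ξ ξ) v = 0 := by
      rw [← ha, hp0]; rfl
    simp only [comm_apply, rk_apply, map_smul] at h1
    rw [← sub_eq_zero]
    exact h1
  exact commutant_rk hξ0 hξ0 hcomm

lemma col_formula (hP : Pairwise2 Φ) (hξ : (⟪ξ, ξ⟫ : ℂ) = 1) (hp0 : Φ (rk ξ ξ) = 0)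
    (η v : H) : Φ (rk η ξ) v = ⟪ξ, v⟫ • Bmap Φ ξ η := by
  obtain ⟨a, h1, h2⟩ := hP (rk η ξ) (rk ξ ξ)
  obtain ⟨lam, hl1, hl2⟩ := p_struct hξ hp0 h2
  have key : ∀ w, Φ (rk η ξ) w = ⟪ξ, w⟫ • (a η - lam • η) := by
    intro w
    rw [h1, comm_apply, rk_apply, map_smul, rk_apply, hl2 w]
    module
  have hB : Bmap Φ ξ η = a η - lam • η := by
    rw [Bmap, key ξ, hξ, one_smul]
  rw [key v, hB]

lemma row_formula (hP : Pairwise2 Φ) (hξ : (⟪ξ, ξ⟫ : ℂ) = 1) (hp0 : Φ (rk ξ ξ) = 0)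
    (ζ v : H) : Φ (rk ξ ζ) v = -(⟪Rmap Φ ξ ζ, v⟫ • ξ) := by
  obtain ⟨a, h1, h2⟩ := hP (rk ξ ζ) (rk ξ ξ)
  obtain ⟨lam, hl1, hl2⟩ := p_struct hξ hp0 h2
  have key : ∀ w, Φ (rk ξ ζ) w = (lam * ⟪ζ, w⟫ - ⟪ζ, a w⟫) • ξ := by
    intro w
    rw [h1, comm_apply, rk_apply, map_smul, rk_apply, hl1]
    module
  have hval : ⟪Rmap Φ ξ ζ, v⟫ = -(lam * ⟪ζ, v⟫ - ⟪ζ, a v⟫) := by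
    rw [rmap_inner, key v, inner_smul_right, hξ, mul_one]
  rw [key v, hval, neg_smul, neg_neg]

/-- structure of implementers at column rank-one operators. -/
lemma col_struct (hP : Pairwise2 Φ) (hξ : (⟪ξ, ξ⟫ : ℂ) = 1) (hp0 : Φ (rk ξ ξ) = 0)
    {η : H} (hη : η ≠ 0) {a : H →L[ℂ] H} (ha : Φ (rk η ξ) = comm a (rk η ξ)) :
    ∃ c : ℂ, a η = Bmap Φ ξ η + c • η ∧ ∀ v, ⟪ξ, a v⟫ = c * ⟪ξ, v⟫ := by
  have key : ∀ v, ⟪ξ, v⟫ • a η - ⟪ξ, a v⟫ • η = ⟪ξ, v⟫ • Bmap Φ ξ η := by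
    intro v
    have h := col_formula hP hξ hp0 η v
    rw [ha] at h
    simpa only [comm_apply, rk_apply, map_smul] using h
  have hc : a η = Bmap Φ ξ η + ⟪ξ, a ξ⟫ • η := by
    have h := key ξ
    rw [hξ, one_smul, one_smul] at h
    rw [sub_eq_iff_eq_add] at h
    exact h
  refine ⟨⟪ξ, a ξ⟫, hc, ?_⟩
  intro v
  have h2 : (⟪ξ, v⟫ * ⟪ξ, a ξ⟫ - ⟪ξ, a v⟫) • η = 0 := by
    have h := key v
    rw [hc] at h
    rw [sub_smul, mul_smul]
    rw [smul_add] at h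
    linear_combination (norm := module) h
  have h3 := coeff_zero hη h2
  linear_combination -h3

/-- structure of implementers at row rank-one operators. -/
lemma row_struct (hP : Pairwise2 Φ) (hξ : (⟪ξ, ξ⟫ : ℂ) = 1) (hp0 : Φ (rk ξ ξ) = 0)
    {ζ : H} (hζ : ζ ≠ 0) {a : H →L[ℂ] H} (ha : Φ (rk ξ ζ) = comm a (rk ξ ζ)) :
    ∃ mu : ℂ, a ξ = mu • ξ ∧ ∀ v, ⟪ζ, a v⟫ = ⟪Rmap Φ ξ ζ, v⟫ + mu * ⟪ζ, v⟫ := by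
  have hξ0 : ξ ≠ 0 := xi_ne hξ
  have hz : (⟪ζ, ζ⟫ : ℂ) ≠ 0 := fun hc => hζ (inner_self_eq_zero.mp hc)
  have key : ∀ v, ⟪ζ, v⟫ • a ξ - ⟪ζ, a v⟫ • ξ = -(⟪Rmap Φ ξ ζ, v⟫ • ξ) := by
    intro v
    have h := row_formula hP hξ hp0 ζ v
    rw [ha] at h
    simpa only [comm_apply, rk_apply, map_smul] using h
  set mu : ℂ := (⟪ζ, a ζ⟫ - ⟪Rmap Φ ξ ζ, ζ⟫) / ⟪ζ, ζ⟫ with hmu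
  have hm : a ξ = mu • ξ := by
    have h := key ζ
    -- ⟪ζ,ζ⟫ • a ξ - ⟪ζ,aζ⟫ • ξ = -(⟪ρζ,ζ⟫ • ξ)
    have h' : (⟪ζ, ζ⟫ : ℂ) • a ξ = (⟪ζ, a ζ⟫ - ⟪Rmap Φ ξ ζ, ζ⟫) • ξ := by
      linear_combination (norm := module) h
    have : a ξ = (⟪ζ, ζ⟫ : ℂ)⁻¹ • ((⟪ζ, a ζ⟫ - ⟪Rmap Φ ξ ζ, ζ⟫) • ξ) := by
      rw [← h', smul_smul, inv_mul_cancel₀ hz, one_smul]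
    rw [this, smul_smul, hmu, div_eq_inv_mul]
  refine ⟨mu, hm, ?_⟩
  intro v
  have h2 : (mu * ⟪ζ, v⟫ - ⟪ζ, a v⟫ + ⟪Rmap Φ ξ ζ, v⟫) • ξ = 0 := by
    have h := key v
    rw [hm, smul_smul] at h
    linear_combination (norm := module) h
  have h3 := coeff_zero hξ0 h2
  linear_combination -h3

/-- canonical form of `Φ` on rank one operators, with scalar defect. -/
lemma canonical_form (hP : Pairwise2 Φ) (hξ : (⟪ξ, ξ⟫ : ℂ) = 1) (hp0 : Φ (rk ξ ξ) = 0)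
    {η ζ : H} (hη : η ≠ 0) (hζ : ζ ≠ 0) :
    ∃ κ : ℂ, ∀ v, Φ (rk η ζ) v
      = ⟪ζ, v⟫ • Bmap Φ ξ η - ⟪Rmap Φ ξ ζ, v⟫ • η - (κ * ⟪ζ, v⟫) • η := by
  have hz : (⟪ζ, ζ⟫ : ℂ) ≠ 0 := fun hc => hζ (inner_self_eq_zero.mp hc)
  obtain ⟨a, h1, h2⟩ := hP (rk η ζ) (rk η ξ)
  obtain ⟨c, hc1, hc2⟩ := col_struct hP hξ hp0 hη h2
  obtain ⟨a', h1', h2'⟩ := hP (rk η ζ) (rk ξ ζ)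
  obtain ⟨mu, hm1, hm2⟩ := row_struct hP hξ hp0 hζ h2'
  have colExpr : ∀ v, Φ (rk η ζ) v
      = ⟪ζ, v⟫ • Bmap Φ ξ η + (c * ⟪ζ, v⟫ - ⟪ζ, a v⟫) • η := by
    intro v
    rw [h1, comm_apply, rk_apply, map_smul, rk_apply, hc1]
    module
  have rowExpr : ∀ v, Φ (rk η ζ) v
      = ⟪ζ, v⟫ • (a' η - mu • η) - ⟪Rmap Φ ξ ζ, v⟫ • η := by
    intro v
    rw [h1', comm_apply, rk_apply, map_smul, rk_apply, hm2 v]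
    module
  set τ : ℂ := (c * ⟪ζ, ζ⟫ - ⟪ζ, a ζ⟫ + ⟪Rmap Φ ξ ζ, ζ⟫) / ⟪ζ, ζ⟫ with hτ
  have hg : a' η - mu • η = Bmap Φ ξ η + τ • η := by
    have e1 := colExpr ζ
    have e2 := rowExpr ζ
    have e : (⟪ζ, ζ⟫ : ℂ) • Bmap Φ ξ η + (c * ⟪ζ, ζ⟫ - ⟪ζ, a ζ⟫) • η
        = ⟪ζ, ζ⟫ • (a' η - mu • η) - ⟪Rmap Φ ξ ζ, ζ⟫ • η := e1.symm.trans e2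
    have e3 : (⟪ζ, ζ⟫ : ℂ) • (a' η - mu • η)
        = ⟪ζ, ζ⟫ • Bmap Φ ξ η + (c * ⟪ζ, ζ⟫ - ⟪ζ, a ζ⟫ + ⟪Rmap Φ ξ ζ, ζ⟫) • η := by
      linear_combination (norm := module) -e
    have : a' η - mu • η = (⟪ζ, ζ⟫ : ℂ)⁻¹
        • (⟪ζ, ζ⟫ • Bmap Φ ξ η + (c * ⟪ζ, ζ⟫ - ⟪ζ, a ζ⟫ + ⟪Rmap Φ ξ ζ, ζ⟫) • η) := by
      rw [← e3, smul_smul, inv_mul_cancel₀ hz, one_smul]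
    rw [this, smul_add, smul_smul, smul_smul, inv_mul_cancel₀ hz, one_smul, hτ,
        div_eq_inv_mul]
  refine ⟨-τ, ?_⟩
  intro v
  rw [rowExpr v, hg]
  module

/-- R1 : the defect scalar is compatible with the pairing. -/
lemma r1 (hP : Pairwise2 Φ) (hξ : (⟪ξ, ξ⟫ : ℂ) = 1) (hp0 : Φ (rk ξ ξ) = 0)
    {η ζ : H} (hη : η ≠ 0) (hζ : ζ ≠ 0) {κ : ℂ}
    (hκ : ∀ v, Φ (rk η ζ) v
      = ⟪ζ, v⟫ • Bmap Φ ξ η - ⟪Rmap Φ ξ ζ, v⟫ • η - (κ * ⟪ζ, v⟫) • η) :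
    ⟪ζ, Bmap Φ ξ η⟫ = ⟪Rmap Φ ξ ζ, η⟫ + κ * ⟪ζ, η⟫ := by
  have hz : (⟪ζ, ζ⟫ : ℂ) ≠ 0 := fun hc => hζ (inner_self_eq_zero.mp hc)
  obtain ⟨a, h1, -⟩ := hP (rk η ζ) (rk η ζ)
  have key : ∀ v, ⟪ζ, v⟫ • a η - ⟪ζ, a v⟫ • η
      = ⟪ζ, v⟫ • Bmap Φ ξ η - ⟪Rmap Φ ξ ζ, v⟫ • η - (κ * ⟪ζ, v⟫) • η := by
    intro v
    have h := hκ v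
    rw [h1] at h
    simpa only [comm_apply, rk_apply, map_smul] using h
  set σ : ℂ := (⟪ζ, a ζ⟫ - ⟪Rmap Φ ξ ζ, ζ⟫ - κ * ⟪ζ, ζ⟫) / ⟪ζ, ζ⟫ with hσ
  have haη : a η = Bmap Φ ξ η + σ • η := by
    have h := key ζ
    have h' : (⟪ζ, ζ⟫ : ℂ) • a η
        = ⟪ζ, ζ⟫ • Bmap Φ ξ η + (⟪ζ, a ζ⟫ - ⟪Rmap Φ ξ ζ, ζ⟫ - κ * ⟪ζ, ζ⟫) • η := by
      linear_combination (norm := module) h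
    have : a η = (⟪ζ, ζ⟫ : ℂ)⁻¹ • (⟪ζ, ζ⟫ • Bmap Φ ξ η
        + (⟪ζ, a ζ⟫ - ⟪Rmap Φ ξ ζ, ζ⟫ - κ * ⟪ζ, ζ⟫) • η) := by
      rw [← h', smul_smul, inv_mul_cancel₀ hz, one_smul]
    rw [this, smul_add, smul_smul, smul_smul, inv_mul_cancel₀ hz, one_smul, hσ,
        div_eq_inv_mul]
  have havv : ∀ v, ⟪ζ, a v⟫ = ⟪Rmap Φ ξ ζ, v⟫ + (σ + κ) * ⟪ζ, v⟫ := by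
    intro v
    have h := key v
    rw [haη] at h
    have h2 : (σ * ⟪ζ, v⟫ - ⟪ζ, a v⟫ + ⟪Rmap Φ ξ ζ, v⟫ + κ * ⟪ζ, v⟫) • η = 0 := by
      linear_combination (norm := module) h
    have h3 := coeff_zero hη h2
    linear_combination -h3
  have e1 : ⟪ζ, a η⟫ = ⟪ζ, Bmap Φ ξ η⟫ + σ * ⟪ζ, η⟫ := by
    rw [haη, inner_add_right, inner_smul_right]
  have e2 := havv η
  rw [e1] at e2
  linear_combination e2

/-- R2 : the row map is the adjoint of the column map on nonzero vectors. -/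
lemma r2 (hP : Pairwise2 Φ) (hξ : (⟪ξ, ξ⟫ : ℂ) = 1) (hp0 : Φ (rk ξ ξ) = 0)
    {η ζ : H} (hη : η ≠ 0) (hζ : ζ ≠ 0) :
    ⟪ζ, Bmap Φ ξ η⟫ = ⟪Rmap Φ ξ ζ, η⟫ := by
  obtain ⟨a, h1, h2⟩ := hP (rk η ξ) (rk ξ ζ)
  obtain ⟨c, hc1, hc2⟩ := col_struct hP hξ hp0 hη h1
  obtain ⟨mu, hm1, hm2⟩ := row_struct hP hξ hp0 hζ h2
  have hcmu : c = mu := by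
    have := hc2 ξ
    rw [hm1, inner_smul_right, hξ, mul_one, mul_one] at this
    exact this.symm
  have e1 : ⟪ζ, a η⟫ = ⟪ζ, Bmap Φ ξ η⟫ + c * ⟪ζ, η⟫ := by
    rw [hc1, inner_add_right, inner_smul_right]
  have e2 := hm2 η
  rw [e1, hcmu] at e2
  linear_combination e2

lemma rmap_add (hP : Pairwise2 Φ) (ζ ζ' : H) :
    Rmap Φ ξ (ζ + ζ') = Rmap Φ ξ ζ + Rmap Φ ξ ζ' := by
  unfold Rmap
  rw [rk_add_right, phi_add hP, map_add, ContinuousLinearMap.add_apply, neg_add]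

lemma bmap_add (hP : Pairwise2 Φ) (η η' : H) :
    Bmap Φ ξ (η + η') = Bmap Φ ξ η + Bmap Φ ξ η' := by
  unfold Bmap
  rw [rk_add_left, phi_add hP]
  rfl

lemma bmap_smul (hP : Pairwise2 Φ) (c : ℂ) (η : H) :
    Bmap Φ ξ (c • η) = c • Bmap Φ ξ η := by
  unfold Bmap
  rw [rk_smul_left, phi_smul hP]
  rfl

lemma bmap_zero (hP : Pairwise2 Φ) : Bmap Φ ξ (0 : H) = 0 := by
  have := bmap_smul (ξ := ξ) hP 0 0
  rwa [zero_smul, zero_smul] at this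

/-- the defect scalar vanishes. -/
lemma kappa_zero (hP : Pairwise2 Φ) (hξ : (⟪ξ, ξ⟫ : ℂ) = 1) (hp0 : Φ (rk ξ ξ) = 0)
    {η ζ : H} (hη : η ≠ 0) (hζ : ζ ≠ 0) {κ : ℂ}
    (hκ : ∀ v, Φ (rk η ζ) v
      = ⟪ζ, v⟫ • Bmap Φ ξ η - ⟪Rmap Φ ξ ζ, v⟫ • η - (κ * ⟪ζ, v⟫) • η) :
    κ = 0 := by
  have hz : (⟪ζ, ζ⟫ : ℂ) ≠ 0 := fun hc => hζ (inner_self_eq_zero.mp hc)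
  have hh : (⟪η, η⟫ : ℂ) ≠ 0 := fun hc => hη (inner_self_eq_zero.mp hc)
  have hvan : κ * ⟪ζ, η⟫ = 0 := by
    have := r1 hP hξ hp0 hη hζ hκ
    rw [r2 hP hξ hp0 hη hζ] at this
    linear_combination -this
  rcases eq_or_ne (⟪ζ, η⟫ : ℂ) 0 with hzh | hzh
  · -- orthogonal case : use additivity in the second slot
    have hζη : ζ + η ≠ 0 := by
      intro hc
      have : (⟪ζ + η, η⟫ : ℂ) = 0 := by rw [hc, inner_zero_left]
      rw [inner_add_left, hzh, zero_add] at this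
      exact hh this
    obtain ⟨κ₂, hκ₂⟩ := canonical_form hP hξ hp0 hη hζη
    obtain ⟨κ₃, hκ₃⟩ := canonical_form hP hξ hp0 hη hη
    have hκ₂0 : κ₂ = 0 := by
      have h2 := r1 hP hξ hp0 hη hζη hκ₂
      rw [r2 hP hξ hp0 hη hζη] at h2
      have hvan2 : κ₂ * ⟪ζ + η, η⟫ = 0 := by linear_combination -h2
      rw [inner_add_left, hzh, zero_add] at hvan2
      exact (mul_eq_zero.mp hvan2).resolve_right hh
    have hκ₃0 : κ₃ = 0 := by
      have h3 := r1 hP hξ hp0 hη hη hκ₃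
      rw [r2 hP hξ hp0 hη hη] at h3
      have hvan3 : κ₃ * ⟪η, η⟫ = 0 := by linear_combination -h3
      exact (mul_eq_zero.mp hvan3).resolve_right hh
    have hΦadd : Φ (rk η (ζ + η)) = Φ (rk η ζ) + Φ (rk η η) := by
      rw [rk_add_right, phi_add hP]
    have e := congrArg (fun T : H →L[ℂ] H => T ζ) hΦadd
    simp only [ContinuousLinearMap.add_apply] at e
    rw [hκ₂ ζ, hκ ζ, hκ₃ ζ, rmap_add hP, hκ₂0, hκ₃0] at e
    simp only [inner_add_left, zero_mul, zero_smul, sub_zero] at e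
    have h0 : (κ * ⟪ζ, ζ⟫) • η = 0 := by
      linear_combination (norm := module) e
    have := coeff_zero hη h0
    exact (mul_eq_zero.mp this).resolve_right hz
  · exact (mul_eq_zero.mp hvan).resolve_right hzh

lemma rank_one_formula (hP : Pairwise2 Φ) (hξ : (⟪ξ, ξ⟫ : ℂ) = 1) (hp0 : Φ (rk ξ ξ) = 0)
    {η ζ : H} (hη : η ≠ 0) (hζ : ζ ≠ 0) (v : H) :
    Φ (rk η ζ) v = ⟪ζ, v⟫ • Bmap Φ ξ η - ⟪ζ, Bmap Φ ξ v⟫ • η := by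
  obtain ⟨κ, hκ⟩ := canonical_form hP hξ hp0 hη hζ
  have hκ0 := kappa_zero hP hξ hp0 hη hζ hκ
  have hfin := hκ v
  rw [hκ0] at hfin
  have hrv : ⟪Rmap Φ ξ ζ, v⟫ = ⟪ζ, Bmap Φ ξ v⟫ := by
    rcases eq_or_ne v 0 with rfl | hv
    · rw [inner_zero_right, bmap_zero hP, inner_zero_right]
    · exact (r2 hP hξ hp0 hv hζ).symm
  rw [hfin, hrv]
  module

/-- the spatial implementation of `Φ` by the (possibly unbounded) column map. -/
lemma spatial (hP : Pairwise2 Φ) (hξ : (⟪ξ, ξ⟫ : ℂ) = 1) (hp0 : Φ (rk ξ ξ) = 0)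
    (z : H →L[ℂ] H) (η : H) :
    Φ z η = Bmap Φ ξ (z η) - z (Bmap Φ ξ η) := by
  rcases eq_or_ne η 0 with rfl | hη
  · rw [map_zero, map_zero, bmap_zero hP, map_zero, sub_zero]
  apply ext_inner_left ℂ
  intro ζ
  rcases eq_or_ne ζ 0 with rfl | hζ
  · simp
  obtain ⟨a, h1, h2⟩ := hP z (rk η ζ)
  have hcommd : ∀ v, ⟪ζ, v⟫ • ((fun w => a w - Bmap Φ ξ w) η)
      = ⟪ζ, (fun w => a w - Bmap Φ ξ w) v⟫ • η := by
    intro v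
    simp only
    have hf := rank_one_formula hP hξ hp0 hη hζ v
    rw [h2] at hf
    simp only [comm_apply, rk_apply, map_smul] at hf
    rw [inner_sub_right, smul_sub, sub_smul, sub_eq_sub_iff_sub_eq_sub]
    exact hf
  obtain ⟨lam, hd1, hd2⟩ := commutant_rk (d := fun w => a w - Bmap Φ ξ w) hη hζ hcommd
  have hd1' : a η - Bmap Φ ξ η = lam • η := hd1
  rw [h1, comm_apply]
  have e2 : ⟪ζ, a (z η)⟫ = ⟪ζ, Bmap Φ ξ (z η)⟫ + lam * ⟪ζ, z η⟫ := by
    have h := hd2 (z η)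
    simp only [inner_sub_right] at h
    linear_combination h
  have e3 : ⟪ζ, z (a η)⟫ = ⟪ζ, z (Bmap Φ ξ η)⟫ + lam * ⟪ζ, z η⟫ := by
    have hda : a η = Bmap Φ ξ η + lam • η := by
      rw [← hd1']; abel
    rw [hda, map_add, map_smul, inner_add_right, inner_smul_right]
  rw [inner_sub_right, inner_sub_right, e2, e3]
  ring

/-- Closed graph argument: a spatial implementation by an additive homogeneous map is
automatically by a bounded map, hence the implemented map is an inner derivation. -/
lemma implemented_of_spatial (Φ : (H →L[ℂ] H) → (H →L[ℂ] H)) (T : H → H)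
    (hadd : ∀ u v, T (u + v) = T u + T v)
    (hsmul : ∀ (c : ℂ) u, T (c • u) = c • T u)
    (hid : ∀ z η, Φ z η = T (z η) - z (T η)) :
    ∃ a : H →L[ℂ] H, ∀ z, Φ z = comm a z := by
  let T' : H →ₗ[ℂ] H :=
    { toFun := T, map_add' := hadd, map_smul' := hsmul }
  have hcont : Continuous T' := by
    apply LinearMap.continuous_of_seq_closed_graph
    intro u x y hu hTu
    by_contra hne
    set w : H := y - T x with hwdef
    have hw : w ≠ 0 := sub_ne_zero.mpr hne
    have hzw : (⟪w, w⟫ : ℂ) ≠ 0 := fun hc => hw (inner_self_eq_zero.mp hc)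
    set q : H →L[ℂ] H := (⟪w, w⟫ : ℂ)⁻¹ • rk w w with hq
    have hqv : ∀ v, q v = ((⟪w, w⟫ : ℂ)⁻¹ * ⟪w, v⟫) • w := by
      intro v
      rw [hq, ContinuousLinearMap.smul_apply, rk_apply, smul_smul]
    have hqw : q w = w := by
      rw [hqv w, inv_mul_cancel₀ hzw, one_smul]
    have hζ0 : Tendsto (fun n => u n - x) atTop (𝓝 0) := by
      have := hu.sub (tendsto_const_nhds (x := x))
      rwa [sub_self] at this
    have hTζ : Tendsto (fun n => T (u n - x)) atTop (𝓝 w) := by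
      have hf : ∀ n, T (u n - x) = T (u n) - T x := fun n => map_sub T' _ _
      rw [hwdef]
      have := hTu.sub (tendsto_const_nhds (x := T x))
      exact Tendsto.congr (fun n => (hf n).symm) this
    have hγ : Tendsto (fun n => (⟪w, w⟫ : ℂ)⁻¹ * ⟪w, u n - x⟫) atTop (𝓝 0) := by
      have h1 : Tendsto (fun n => (⟪w, u n - x⟫ : ℂ)) atTop (𝓝 0) := by
        have hc : Continuous fun v : H => (⟪w, v⟫ : ℂ) := (innerSL ℂ w).continuous
        have h2 := (hc.tendsto 0).comp hζ0
        rw [inner_zero_right] at h2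
        exact h2
      simpa using h1.const_mul ((⟪w, w⟫ : ℂ)⁻¹)
    have h1 : Tendsto (fun n => T (q (u n - x))) atTop (𝓝 0) := by
      have hform : ∀ n, T (q (u n - x)) = ((⟪w, w⟫ : ℂ)⁻¹ * ⟪w, u n - x⟫) • T w := by
        intro n
        rw [hqv, hsmul]
      have := hγ.smul_const (T w)
      rw [zero_smul] at this
      exact Tendsto.congr (fun n => (hform n).symm) this
    have h2 : Tendsto (fun n => T (q (u n - x))) atTop (𝓝 w) := by
      have hform : ∀ n, T (q (u n - x)) = Φ q (u n - x) + q (T (u n - x)) := by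
        intro n
        have hh := hid q (u n - x)
        have : T (q (u n - x)) - q (T (u n - x)) = Φ q (u n - x) := hh.symm
        rw [sub_eq_iff_eq_add] at this
        exact this
      have ha : Tendsto (fun n => Φ q (u n - x)) atTop (𝓝 0) := by
        have hc := ((Φ q).continuous.tendsto 0).comp hζ0
        rw [map_zero] at hc
        exact hc
      have hb : Tendsto (fun n => q (T (u n - x))) atTop (𝓝 w) := by
        have := (q.continuous.tendsto w).comp hTζ
        rw [hqw] at this
        exact this
      have := ha.add hb
      rw [zero_add] at this
      exact Tendsto.congr (fun n => (hform n).symm) this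
    have := tendsto_nhds_unique h1 h2
    exact hw this.symm
  refine ⟨⟨T', hcont⟩, ?_⟩
  intro z
  ext η
  rw [comm_apply]
  exact hid z η

/-- every (algebraic) derivation of B(H) is inner. -/
lemma derivation_inner (hξ : (⟪ξ, ξ⟫ : ℂ) = 1)
    (D : (H →L[ℂ] H) →ₗ[ℂ] (H →L[ℂ] H))
    (hD : ∀ a b : H →L[ℂ] H, D (a * b) = D a * b + a * D b) :
    ∃ a, ∀ z, D z = comm a z := by
  set T : H → H := fun η => D (rk η ξ) ξ with hT
  have hid : ∀ z η, D z η = T (z η) - z (T η) := by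
    intro z η
    have h0 : rk (z η) ξ = z * rk η ξ := (mul_rk z η ξ).symm
    have h2 : T (z η) = D z η + z (T η) := by
      show D (rk (z η) ξ) ξ = D z η + z (D (rk η ξ) ξ)
      rw [h0, hD]
      rw [ContinuousLinearMap.add_apply, ContinuousLinearMap.mul_apply,
          ContinuousLinearMap.mul_apply, rk_apply, hξ, one_smul]
    rw [h2]; abel
  have hadd : ∀ u v, T (u + v) = T u + T v := by
    intro u v
    show D (rk (u + v) ξ) ξ = D (rk u ξ) ξ + D (rk v ξ) ξ
    rw [rk_add_left, map_add, ContinuousLinearMap.add_apply]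
  have hsmul : ∀ (c : ℂ) u, T (c • u) = c • T u := by
    intro c u
    show D (rk (c • u) ξ) ξ = c • D (rk u ξ) ξ
    rw [rk_smul_left, map_smul, ContinuousLinearMap.smul_apply]
  exact implemented_of_spatial (fun z => D z) T hadd hsmul hid

end TwoLocalAux

/-- Every 2-local derivation on B(H), for H an infinite-dimensional complex
Hilbert space, is an inner derivation. -/
theorem twoLocalDerivation_is_inner
    {H : Type*} [NormedAddCommGroup H] [InnerProductSpace ℂ H] [CompleteSpace H]
    (hH : ¬ FiniteDimensional ℂ H)
    (Δ : (H →L[ℂ] H) → (H →L[ℂ] H))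
    (h : ∀ x y : H →L[ℂ] H, ∃ D : (H →L[ℂ] H) →ₗ[ℂ] (H →L[ℂ] H),
      (∀ a b : H →L[ℂ] H, D (a * b) = D a * b + a * D b) ∧
      Δ x = D x ∧ Δ y = D y) :
    ∃ a : H →L[ℂ] H, ∀ x : H →L[ℂ] H, Δ x = a * x - x * a := by
  classical
  open TwoLocalAux in
  have hnt : Nontrivial H := by
    by_contra hs
    rw [not_nontrivial_iff_subsingleton] at hs
    exact hH (Module.Finite.of_basis (Module.Basis.empty H (ι := Fin 0)))
  obtain ⟨v, hv⟩ := exists_ne (0 : H)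
  have hvn : ‖v‖ ≠ 0 := norm_ne_zero_iff.mpr hv
  set ξ : H := ((‖v‖ : ℂ))⁻¹ • v with hxi
  have hξ : (inner ℂ ξ ξ : ℂ) = 1 := by
    rw [hxi, inner_smul_left, inner_smul_right, inner_self_eq_norm_sq_to_K]
    rw [map_inv₀, Complex.conj_ofReal]
    have hvc : (‖v‖ : ℂ) ≠ 0 := Complex.ofReal_ne_zero.mpr hvn
    field_simp
    rfl
  have hP : TwoLocalAux.Pairwise2 Δ := by
    intro x y
    obtain ⟨D, hD, hx, hy⟩ := h x y
    obtain ⟨a, ha⟩ := TwoLocalAux.derivation_inner hξ D hD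
    exact ⟨a, by rw [hx, ha], by rw [hy, ha]⟩
  obtain ⟨a₀, ha₀, -⟩ := hP (TwoLocalAux.rk ξ ξ) (TwoLocalAux.rk ξ ξ)
  set Φ : (H →L[ℂ] H) → (H →L[ℂ] H) := fun x => Δ x - TwoLocalAux.comm a₀ x with hΦ
  have hPΦ : TwoLocalAux.Pairwise2 Φ := by
    intro x y
    obtain ⟨a, h1, h2⟩ := hP x y
    refine ⟨a - a₀, ?_, ?_⟩
    · rw [hΦ]; simp only; rw [h1, TwoLocalAux.comm_sub_left]
    · rw [hΦ]; simp only; rw [h2, TwoLocalAux.comm_sub_left]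
  have hp0 : Φ (TwoLocalAux.rk ξ ξ) = 0 := by
    rw [hΦ]; simp only; rw [ha₀, sub_self]
  have hsp : ∀ z η, Φ z η = TwoLocalAux.Bmap Φ ξ (z η) - z (TwoLocalAux.Bmap Φ ξ η) :=
    TwoLocalAux.spatial hPΦ hξ hp0
  obtain ⟨a₁, ha₁⟩ := TwoLocalAux.implemented_of_spatial Φ (TwoLocalAux.Bmap Φ ξ)
    (TwoLocalAux.bmap_add hPΦ) (TwoLocalAux.bmap_smul hPΦ) hsp
  refine ⟨a₀ + a₁, ?_⟩
  intro x
  have hΔ : Δ x = Φ x + TwoLocalAux.comm a₀ x := by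
    rw [hΦ]; simp only; abel
  rw [hΔ, ha₁ x]
  show TwoLocalAux.comm a₁ x + TwoLocalAux.comm a₀ x = (a₀ + a₁) * x - x * (a₀ + a₁)
  rw [← TwoLocalAux.comm_add_left]
  show (a₁ + a₀) * x - x * (a₁ + a₀) = (a₀ + a₁) * x - x * (a₀ + a₁)
  rw [add_comm]
end
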